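/- Let (ξ_n)_{n∈ℤ} be a stationary Markov chain and f ∈ L²_0(π). Then the sequence (‖E(S_n|ξ_0,ξ_n)‖)_{n≥1} is subadditive: for all positive integers m and n, ‖E(S_{n+m}|ξ_0,ξ_{n+m})‖ ≤ ‖E(S_n|ξ_0,ξ_n)‖ + ‖E(S_m|ξ_0,ξ_m)‖. -/

import Mathlib

open MeasureTheory ProbabilityTheory Filter
open scoped ENNReal NNReal Topology

noncomputable section

/-- The σ-algebra generated by the random variables `ξ k`, `k ∈ I`. -/
def sigmaOf {Ω S : Type*} [MeasurableSpace S] (ξ : ℤ → Ω → S) (I : Set ℤ) :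
    MeasurableSpace Ω :=
  ⨆ k ∈ I, MeasurableSpace.comap (ξ k) inferInstance

/-- The σ-algebra generated by the pair `(ξ i, ξ j)`. -/
def pairSigma {Ω S : Type*} [MeasurableSpace S] (ξ : ℤ → Ω → S) (i j : ℤ) :
    MeasurableSpace Ω :=
  MeasurableSpace.comap (ξ i) inferInstance ⊔ MeasurableSpace.comap (ξ j) inferInstance

/-- Conditional independence of the σ-algebras `m₁` and `m₂` given `m'`. -/
def CondIndepGiven {Ω : Type*} [MeasurableSpace Ω] (μ : Measure Ω)
    (m' m₁ m₂ : MeasurableSpace Ω) : Prop :=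
  ∀ A B : Set Ω, MeasurableSet[m₁] A → MeasurableSet[m₂] B →
    μ[(A ∩ B).indicator (fun _ => (1 : ℝ)) | m'] =ᵐ[μ]
      fun ω => (μ[A.indicator (fun _ => (1 : ℝ)) | m']) ω *
        (μ[B.indicator (fun _ => (1 : ℝ)) | m']) ω

/-- Markov property: for every `n`, the past `σ(ξ k, k ≤ n)` and the future
`σ(ξ k, k ≥ n)` are conditionally independent given `σ(ξ n)`. -/
def IsMarkovChain {Ω S : Type*} [MeasurableSpace Ω] [MeasurableSpace S]
    (μ : Measure Ω) (ξ : ℤ → Ω → S) : Prop :=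
  ∀ n : ℤ, CondIndepGiven μ (MeasurableSpace.comap (ξ n) inferInstance)
    (sigmaOf ξ {k | k ≤ n}) (sigmaOf ξ {k | n ≤ k})

/-- Stationarity: `(ξ (n+1))_n` has the same law as `(ξ n)_n`. -/
def IsStationaryZ {Ω S : Type*} [MeasurableSpace Ω] [MeasurableSpace S]
    (μ : Measure Ω) (ξ : ℤ → Ω → S) : Prop :=
  Measure.map (fun ω (n : ℤ) => ξ (n + 1) ω) μ = Measure.map (fun ω (n : ℤ) => ξ n ω) μ

/-- The left shift on path space `S^ℤ`. -/
def shiftZ {S : Type*} (x : ℤ → S) : ℤ → S := fun n => x (n + 1)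

/-- Total ergodicity: every iterate of the shift is ergodic for the law of the chain. -/
def TotallyErgodic {Ω S : Type*} [MeasurableSpace Ω] [MeasurableSpace S]
    (μ : Measure Ω) (ξ : ℤ → Ω → S) : Prop :=
  ∀ k : ℕ, 0 < k → Ergodic (shiftZ^[k]) (Measure.map (fun ω (n : ℤ) => ξ n ω) μ)

/-- Partial sums `S_n = f(ξ 1) + ⋯ + f(ξ n)`. -/
def pS {Ω S : Type*} (ξ : ℤ → Ω → S) (f : S → ℝ) (n : ℕ) (ω : Ω) : ℝ :=
  ∑ i ∈ Finset.Icc 1 n, f (ξ (i : ℤ) ω)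

/-- Convergence in distribution (weak convergence of the laws) of real random
variables to the measure `ν`. -/
def TendstoInDistribution {Ω : Type*} [MeasurableSpace Ω] (μ : Measure Ω)
    (Y : ℕ → Ω → ℝ) (ν : Measure ℝ) : Prop :=
  ∀ g : BoundedContinuousFunction ℝ ℝ,
    Tendsto (fun n => ∫ ω, g (Y n ω) ∂μ) atTop (𝓝 (∫ x, g x ∂ν))


section Helpers

variable {Ω : Type*}

/-- Transport of conditional expectation along a measurable map. -/
lemma condexp_comp_ae_eq {Ω' : Type*} {m' : MeasurableSpace Ω'} [m0 : MeasurableSpace Ω]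
    [m0' : MeasurableSpace Ω'] (μ : Measure Ω) [IsProbabilityMeasure μ] {T : Ω → Ω'} (hT : Measurable T)
    (hm' : m' ≤ m0') {H : Ω' → ℝ}
    (hH : Integrable H (Measure.map T μ)) :
    ((Measure.map T μ)[H | m']) ∘ T =ᵐ[μ] μ[H ∘ T | m'.comap T] := by
  haveI : IsProbabilityMeasure (Measure.map T μ) := Measure.isProbabilityMeasure_map hT.aemeasurable
  have hm : m'.comap T ≤ m0 := (MeasurableSpace.comap_mono hm').trans hT.comap_le
  have hTm : @Measurable Ω Ω' (m'.comap T) m' T := fun t ht => ⟨t, ht, rfl⟩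
  have hg_meas : AEStronglyMeasurable[m'.comap T] (((Measure.map T μ)[H|m']) ∘ T) μ :=
    (stronglyMeasurable_condExp.comp_measurable hTm).aestronglyMeasurable
  have hint : Integrable (H ∘ T) μ := (integrable_map_measure hH.1 hT.aemeasurable).mp hH
  have hcond_int : Integrable (((Measure.map T μ)[H|m']) ∘ T) μ :=
    (integrable_map_measure (stronglyMeasurable_condExp.mono hm').aestronglyMeasurable
      hT.aemeasurable).mp integrable_condExp
  refine ae_eq_condExp_of_forall_setIntegral_eq hm hint
    (fun s _ _ => hcond_int.integrableOn) ?_ hg_meas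
  rintro s ⟨t, ht, rfl⟩ -
  calc ∫ x in T ⁻¹' t, (((Measure.map T μ)[H|m']) ∘ T) x ∂μ
      = ∫ y in t, ((Measure.map T μ)[H|m']) y ∂(Measure.map T μ) :=
        (setIntegral_map (hm' t ht)
          (stronglyMeasurable_condExp.mono hm').aestronglyMeasurable hT.aemeasurable).symm
    _ = ∫ y in t, H y ∂(Measure.map T μ) := setIntegral_condExp hm' hH ht
    _ = ∫ x in T ⁻¹' t, (H ∘ T) x ∂μ := setIntegral_map (hm' t ht) hH.1 hT.aemeasurable

lemma condexp_L2_ae_eq {m : MeasurableSpace Ω} [m0 : MeasurableSpace Ω] (hm : m ≤ m0) (μ : Measure Ω)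
    [IsProbabilityMeasure μ] {X : Ω → ℝ} (hX : MemLp X 2 μ) :
    (condExpL2 ℝ ℝ hm (hX.toLp X) : Ω → ℝ) =ᵐ[μ] μ[X|m] :=
  ae_eq_condExp_of_forall_setIntegral_eq hm (hX.integrable one_le_two)
    (fun _ _ hμs => integrableOn_condExpL2_of_measure_ne_top hm hμs.ne _)
    (fun s hs hμs => by
      rw [integral_condExpL2_eq hm (hX.toLp X) hs hμs.ne]
      exact setIntegral_congr_ae (hm s hs) ((hX.coeFn_toLp).mono fun ω h _ => h))
    (aestronglyMeasurable_condExpL2 hm _)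

lemma memℒp_two_condexp {m : MeasurableSpace Ω} [m0 : MeasurableSpace Ω] (hm : m ≤ m0) (μ : Measure Ω)
    [IsProbabilityMeasure μ] {X : Ω → ℝ} (hX : MemLp X 2 μ) : MemLp (μ[X|m]) 2 μ :=
  (Lp.memLp ((condExpL2 ℝ ℝ hm (hX.toLp X) : Lp ℝ 2 μ))).ae_eq (condexp_L2_ae_eq hm μ hX)

lemma eLpNorm_two_condexp_le {m : MeasurableSpace Ω} [m0 : MeasurableSpace Ω] (hm : m ≤ m0) (μ : Measure Ω)
    [IsProbabilityMeasure μ] {X : Ω → ℝ} (hX : MemLp X 2 μ) :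
    eLpNorm (μ[X|m]) 2 μ ≤ eLpNorm X 2 μ := by
  rw [← eLpNorm_congr_ae (condexp_L2_ae_eq hm μ hX)]
  calc eLpNorm (condExpL2 ℝ ℝ hm (hX.toLp X) : Ω → ℝ) 2 μ
      ≤ eLpNorm (hX.toLp X : Ω → ℝ) 2 μ := eLpNorm_condExpL2_le hm _
    _ = eLpNorm X 2 μ := eLpNorm_congr_ae hX.coeFn_toLp


set_option synthInstance.maxHeartbeats 1000000 in
set_option maxHeartbeats 1000000 in
lemma prod_rule_aux {m' mP mF : MeasurableSpace Ω} [m0 : MeasurableSpace Ω]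
    (μ : Measure Ω) [IsProbabilityMeasure μ]
    (hmP : mP ≤ m0) (hmF : mF ≤ m0) (hm' : m' ≤ m0)
    (hCI : CondIndepGiven μ m' mP mF) {B : Set Ω} (hB : MeasurableSet[mF] B) :
    ∀ ⦃Y : Ω → ℝ⦄, Integrable Y (μ.trim hmP) →
      μ[Y * B.indicator (fun _ => (1:ℝ)) | m'] =ᵐ[μ]
        (μ[Y | m']) * (μ[B.indicator (fun _ => (1:ℝ)) | m']) := by
  set χ : Ω → ℝ := B.indicator (fun _ => (1:ℝ)) with hχ
  have hχmeas : StronglyMeasurable χ := stronglyMeasurable_const.indicator (hmF B hB)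
  have hχbdd : ∀ ω, ‖χ ω‖ ≤ 1 := by
    intro ω; by_cases h : ω ∈ B <;> simp [hχ, Set.indicator_apply, h]
  have hmul : ∀ {Y : Ω → ℝ}, Integrable Y μ → Integrable (Y * χ) μ := by
    intro Y hY
    exact (hY.bdd_mul hχmeas.aestronglyMeasurable (c := 1) (Eventually.of_forall hχbdd)).congr
      (Eventually.of_forall fun ω => mul_comm _ _)
  have hχint : Integrable χ μ := (integrable_const (1:ℝ)).indicator (hmF B hB)
  have hcbdd : ∀ᵐ ω ∂μ, ‖(μ[χ|m']) ω‖ ≤ 1 := by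
    have h0 : 0 ≤ᵐ[μ] μ[χ|m'] :=
      condExp_nonneg (Eventually.of_forall fun ω =>
        Set.indicator_nonneg (fun _ _ => zero_le_one) ω)
    have h1le : μ[χ|m'] ≤ᵐ[μ] μ[(fun _ => (1:ℝ))|m'] :=
      condExp_mono hχint (integrable_const 1)
        (Eventually.of_forall fun ω => Set.indicator_le_self' (fun _ _ => zero_le_one) ω)
    rw [condExp_const hm'] at h1le
    filter_upwards [h0, h1le] with ω h0' h1'
    rw [Real.norm_eq_abs, abs_le]
    have h0'' : (0:ℝ) ≤ (μ[χ|m']) ω := by simpa using h0'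
    exact ⟨by linarith, h1'⟩
  refine @Integrable.induction Ω ℝ mP _ (μ.trim hmP)
    (fun Y => μ[Y * χ | m'] =ᵐ[μ] (μ[Y | m']) * (μ[χ | m'])) ?_ ?_ ?_ ?_
  · -- indicators
    intro x s hs _
    have h1 : (s.indicator fun _ => x) = x • (s.indicator fun _ => (1:ℝ)) := by
      funext ω; by_cases h : ω ∈ s <;> simp [Set.indicator_apply, h]
    have h2 : (s.indicator fun _ => x) * χ = x • ((s ∩ B).indicator fun _ => (1:ℝ)) := by
      funext ω
      by_cases h : ω ∈ s <;> by_cases h' : ω ∈ B <;>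
        simp [hχ, Set.indicator_apply, h, h', Pi.mul_apply, Set.mem_inter_iff]
    have hsB := hCI s B hs hB
    have hsm := condExp_smul (μ := μ) (m := m') x ((s ∩ B).indicator fun _ => (1:ℝ))
    have hsm2 := condExp_smul (μ := μ) (m := m') x (s.indicator fun _ => (1:ℝ))
    rw [h2, h1]
    filter_upwards [hsB, hsm, hsm2] with ω h hs1 hs2
    simp only [Pi.mul_apply] at *
    rw [hs1, hs2]
    simp only [Pi.smul_apply, smul_eq_mul]
    rw [h]; ring
  · -- additivity
    intro g₁ g₂ _ h1 h2 hP1 hP2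
    have h1' := integrable_of_integrable_trim hmP h1
    have h2' := integrable_of_integrable_trim hmP h2
    have hadd : (g₁ + g₂) * χ = g₁ * χ + g₂ * χ := by funext ω; simp [add_mul]
    have e1 := condExp_add (μ := μ) (m := m') (hmul h1') (hmul h2')
    have e2 := condExp_add (μ := μ) (m := m') h1' h2'
    rw [hadd]
    filter_upwards [e1, e2, hP1, hP2] with ω he1 he2 hp1 hp2
    simp only [Pi.add_apply, Pi.mul_apply] at *
    rw [he1, he2, hp1, hp2]; ring
  · -- closedness in L¹(trim)
    refine IsSeqClosed.isClosed ?_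
    intro F G hF hFG
    have hFk : ∀ k, Integrable (⇑(F k)) μ :=
      fun k => integrable_of_integrable_trim hmP (L1.integrable_coeFn (F k))
    have hG : Integrable (⇑G) μ := integrable_of_integrable_trim hmP (L1.integrable_coeFn G)
    have htend : Tendsto (fun k => eLpNorm (⇑(F k) - ⇑G) 1 (μ.trim hmP)) atTop (𝓝 0) :=
      (Lp.tendsto_Lp_iff_tendsto_eLpNorm' F G).mp hFG
    have htrim : ∀ k, eLpNorm (⇑(F k) - ⇑G) 1 (μ.trim hmP) = eLpNorm (⇑(F k) - ⇑G) 1 μ :=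
      fun k => eLpNorm_trim_ae hmP ((Lp.aestronglyMeasurable (F k)).sub (Lp.aestronglyMeasurable G))
    have htendμ : Tendsto (fun k => eLpNorm (⇑(F k) - ⇑G) 1 μ) atTop (𝓝 0) := by
      refine htend.congr fun k => htrim k
    have key1 : ∀ k, eLpNorm (μ[⇑(F k) * χ|m'] - μ[⇑G * χ|m']) 1 μ
        ≤ eLpNorm (⇑(F k) - ⇑G) 1 μ := by
      intro k
      have hsub : μ[⇑(F k) * χ|m'] - μ[⇑G * χ|m'] =ᵐ[μ] μ[⇑(F k) * χ - ⇑G * χ|m'] :=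
        (condExp_sub (hmul (hFk k)) (hmul hG) _).symm
      rw [eLpNorm_congr_ae hsub]
      refine (eLpNorm_one_condExp_le_eLpNorm _).trans (eLpNorm_mono fun ω => ?_)
      simp only [Pi.sub_apply, Pi.mul_apply]
      rw [← sub_mul, Real.norm_eq_abs, Real.norm_eq_abs, abs_mul]
      calc |((F k : Ω → ℝ) ω - G ω)| * |χ ω| ≤ |((F k : Ω → ℝ) ω - G ω)| * 1 := by
            refine mul_le_mul_of_nonneg_left ?_ (abs_nonneg _)
            simpa [Real.norm_eq_abs] using hχbdd ω
        _ = |((F k : Ω → ℝ) ω - G ω)| := mul_one _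
    have key2 : ∀ k, eLpNorm ((μ[⇑(F k)|m']) * (μ[χ|m']) - (μ[⇑G|m']) * (μ[χ|m'])) 1 μ
        ≤ eLpNorm (⇑(F k) - ⇑G) 1 μ := by
      intro k
      have hsub : (μ[⇑(F k)|m']) * (μ[χ|m']) - (μ[⇑G|m']) * (μ[χ|m'])
          =ᵐ[μ] (μ[⇑(F k) - ⇑G|m']) * (μ[χ|m']) := by
        filter_upwards [condExp_sub (μ := μ) (m := m') (hFk k) hG] with ω h
        simp only [Pi.sub_apply, Pi.mul_apply] at *
        rw [h]; ring
      rw [eLpNorm_congr_ae hsub]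
      calc eLpNorm ((μ[⇑(F k) - ⇑G|m']) * (μ[χ|m'])) 1 μ
          ≤ eLpNorm (μ[⇑(F k) - ⇑G|m']) 1 μ := by
            refine eLpNorm_mono_ae (hcbdd.mono fun ω h => ?_)
            simp only [Pi.mul_apply, norm_mul]
            exact mul_le_of_le_one_right (norm_nonneg _) h
        _ ≤ eLpNorm (⇑(F k) - ⇑G) 1 μ := eLpNorm_one_condExp_le_eLpNorm _
    have hGG : eLpNorm (μ[⇑G * χ|m'] - (μ[⇑G|m']) * (μ[χ|m'])) 1 μ = 0 := by
      have hle : ∀ k, eLpNorm (μ[⇑G * χ|m'] - (μ[⇑G|m']) * (μ[χ|m'])) 1 μ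
          ≤ eLpNorm (⇑(F k) - ⇑G) 1 μ + eLpNorm (⇑(F k) - ⇑G) 1 μ := by
        intro k
        have hdecomp : μ[⇑G * χ|m'] - (μ[⇑G|m']) * (μ[χ|m']) =ᵐ[μ]
            (μ[⇑G * χ|m'] - μ[⇑(F k) * χ|m'])
              + ((μ[⇑(F k)|m']) * (μ[χ|m']) - (μ[⇑G|m']) * (μ[χ|m'])) := by
          filter_upwards [hF k] with ω h
          simp only [Pi.add_apply, Pi.sub_apply, Pi.mul_apply] at *
          rw [h]; ring
        rw [eLpNorm_congr_ae hdecomp]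
        have aesm1 : AEStronglyMeasurable (μ[⇑G * χ|m'] - μ[⇑(F k) * χ|m']) μ :=
          ((stronglyMeasurable_condExp.mono hm').aestronglyMeasurable).sub
            ((stronglyMeasurable_condExp.mono hm').aestronglyMeasurable)
        have aesm2 : AEStronglyMeasurable
            ((μ[⇑(F k)|m']) * (μ[χ|m']) - (μ[⇑G|m']) * (μ[χ|m'])) μ :=
          (((stronglyMeasurable_condExp.mono hm').aestronglyMeasurable).mul
            ((stronglyMeasurable_condExp.mono hm').aestronglyMeasurable)).sub
            (((stronglyMeasurable_condExp.mono hm').aestronglyMeasurable).mul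
              ((stronglyMeasurable_condExp.mono hm').aestronglyMeasurable))
        refine (eLpNorm_add_le aesm1 aesm2 le_rfl).trans ?_
        refine add_le_add ?_ (key2 k)
        rw [eLpNorm_sub_comm]
        exact key1 k
      have h2 : Tendsto (fun k => eLpNorm (⇑(F k) - ⇑G) 1 μ + eLpNorm (⇑(F k) - ⇑G) 1 μ)
          atTop (𝓝 0) := by simpa using htendμ.add htendμ
      exact le_antisymm (ge_of_tendsto' h2 hle) zero_le
    have hzero : μ[⇑G * χ|m'] - (μ[⇑G|m']) * (μ[χ|m']) =ᵐ[μ] 0 := by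
      refine (eLpNorm_eq_zero_iff ?_ one_ne_zero).mp hGG
      exact ((stronglyMeasurable_condExp.mono hm').aestronglyMeasurable).sub
        (((stronglyMeasurable_condExp.mono hm').aestronglyMeasurable).mul
          ((stronglyMeasurable_condExp.mono hm').aestronglyMeasurable))
    filter_upwards [hzero] with ω h
    have h' : (μ[⇑G * χ|m']) ω - ((μ[⇑G|m']) * (μ[χ|m'])) ω = 0 := h
    simp only [Pi.mul_apply] at *
    linarith
  · -- a.e. closure
    intro g₁ g₂ hae _ hP
    have haeμ : g₁ =ᵐ[μ] g₂ := ae_eq_of_ae_eq_trim hae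
    have e1 : μ[g₂ * χ|m'] =ᵐ[μ] μ[g₁ * χ|m'] :=
      condExp_congr_ae (haeμ.symm.mul EventuallyEq.rfl)
    have e2 : μ[g₂|m'] =ᵐ[μ] μ[g₁|m'] := condExp_congr_ae haeμ.symm
    filter_upwards [e1, e2, hP] with ω h1 h2 hp
    simp only [Pi.mul_apply] at *
    rw [h1, h2, hp]

set_option maxHeartbeats 1000000 in
lemma condexp_sup_of_condIndep {m' mP mF mA mB : MeasurableSpace Ω} [m0 : MeasurableSpace Ω]
    (μ : Measure Ω) [IsProbabilityMeasure μ]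
    (hmP : mP ≤ m0) (hmF : mF ≤ m0)
    (hCI : CondIndepGiven μ m' mP mF)
    (hm'A : m' ≤ mA) (hAP : mA ≤ mP) (hBF : mB ≤ mF)
    {X : Ω → ℝ} (hX : Integrable X μ) (hXm : StronglyMeasurable[mP] X) :
    μ[X | mA ⊔ mB] =ᵐ[μ] μ[X | mA] := by
  have hmA : mA ≤ m0 := hAP.trans hmP
  have hmB : mB ≤ m0 := hBF.trans hmF
  have hm'0 : m' ≤ m0 := hm'A.trans hmA
  have hmAB : mA ⊔ mB ≤ m0 := sup_le hmA hmB
  have hrect : ∀ (A B : Set Ω), MeasurableSet[mA] A → MeasurableSet[mB] B →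
      ∫ ω in A ∩ B, (μ[X|mA]) ω ∂μ = ∫ ω in A ∩ B, X ω ∂μ := by
    intro A B hA hB
    set χA : Ω → ℝ := A.indicator (fun _ => 1) with hχA
    set χB : Ω → ℝ := B.indicator (fun _ => 1) with hχB
    have hAmeas0 : MeasurableSet A := hmA A hA
    have hBmeas0 : MeasurableSet B := hmB B hB
    have hχA_sm : StronglyMeasurable[mA] χA := stronglyMeasurable_const.indicator hA
    have hχA_bdd : ∀ ω, ‖χA ω‖ ≤ 1 := by
      intro ω; by_cases h : ω ∈ A <;> simp [hχA, Set.indicator_apply, h]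
    have hχB_sm : StronglyMeasurable χB := stronglyMeasurable_const.indicator hBmeas0
    have hχB_bdd : ∀ ω, ‖χB ω‖ ≤ 1 := by
      intro ω; by_cases h : ω ∈ B <;> simp [hχB, Set.indicator_apply, h]
    have hmulB : ∀ {Z : Ω → ℝ}, Integrable Z μ → Integrable (Z * χB) μ := by
      intro Z hZ
      exact (hZ.bdd_mul hχB_sm.aestronglyMeasurable (c := 1) (Eventually.of_forall hχB_bdd)).congr
        (Eventually.of_forall fun ω => mul_comm _ _)
    have hZ1_int : Integrable (χA * X) μ :=
      hX.bdd_mul (hχA_sm.mono hmA).aestronglyMeasurable (c := 1) (Eventually.of_forall hχA_bdd)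
    have hZ2_int : Integrable (χA * μ[X|mA]) μ :=
      integrable_condExp.bdd_mul (hχA_sm.mono hmA).aestronglyMeasurable (c := 1) (Eventually.of_forall hχA_bdd)
    have hZ1_sm : StronglyMeasurable[mP] (χA * X) := (hχA_sm.mono hAP).mul hXm
    have hZ2_sm : StronglyMeasurable[mP] (χA * μ[X|mA]) :=
      (hχA_sm.mono hAP).mul (stronglyMeasurable_condExp.mono hAP)
    have hpull : μ[χA * X | mA] =ᵐ[μ] χA * μ[X|mA] :=
      condExp_mul_of_stronglyMeasurable_left hχA_sm hZ1_int hX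
    have hcond_eq : μ[χA * X|m'] =ᵐ[μ] μ[χA * μ[X|mA]|m'] :=
      ((condExp_condExp_of_le hm'A hmA).symm).trans (condExp_congr_ae hpull)
    have hmain : ∀ Z : Ω → ℝ, Integrable Z μ → StronglyMeasurable[mP] Z →
        ∫ ω, (Z * χB) ω ∂μ = ∫ ω, ((μ[Z|m']) * (μ[χB|m'])) ω ∂μ := by
      intro Z hZint hZsm
      have hp := prod_rule_aux μ hmP hmF hm'0 hCI (hBF B hB) (hZint.trim hmP hZsm)
      rw [← integral_condExp hm'0 (f := Z * χB)]
      exact integral_congr_ae hp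
    have hsetint : ∀ Z : Ω → ℝ, ∫ ω in A ∩ B, Z ω ∂μ = ∫ ω, ((χA * Z) * χB) ω ∂μ := by
      intro Z
      rw [← integral_indicator (hAmeas0.inter hBmeas0)]
      refine integral_congr_ae (Eventually.of_forall fun ω => ?_)
      by_cases h1 : ω ∈ A <;> by_cases h2 : ω ∈ B <;>
        simp [Set.indicator_apply, h1, h2, Set.mem_inter_iff, hχA, hχB]
    rw [hsetint X, hsetint (μ[X|mA]), hmain (χA * X) hZ1_int hZ1_sm,
      hmain (χA * μ[X|mA]) hZ2_int hZ2_sm]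
    exact (integral_congr_ae (hcond_eq.mul EventuallyEq.rfl)).symm
  have hpi : IsPiSystem {s : Set Ω | ∃ A B, MeasurableSet[mA] A ∧ MeasurableSet[mB] B ∧
      s = A ∩ B} := by
    rintro s ⟨A, B, hA, hB, rfl⟩ t ⟨A', B', hA', hB', rfl⟩ -
    exact ⟨A ∩ A', B ∩ B', hA.inter hA', hB.inter hB', Set.inter_inter_inter_comm A B A' B'⟩
  have hCgen : mA ⊔ mB = MeasurableSpace.generateFrom
      {s : Set Ω | ∃ A B, MeasurableSet[mA] A ∧ MeasurableSet[mB] B ∧ s = A ∩ B} := by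
    apply le_antisymm
    · refine sup_le ?_ ?_
      · intro s hs
        exact MeasurableSpace.measurableSet_generateFrom
          ⟨s, Set.univ, hs, MeasurableSet.univ, (Set.inter_univ s).symm⟩
      · intro s hs
        exact MeasurableSpace.measurableSet_generateFrom
          ⟨Set.univ, s, MeasurableSet.univ, hs, (Set.univ_inter s).symm⟩
    · refine MeasurableSpace.generateFrom_le ?_
      rintro s ⟨A, B, hA, hB, rfl⟩
      exact ((le_sup_left : mA ≤ mA ⊔ mB) A hA).inter ((le_sup_right : mB ≤ mA ⊔ mB) B hB)
  have hC : ∀ t, MeasurableSet[mA ⊔ mB] t →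
      ∫ ω in t, (μ[X|mA]) ω ∂μ = ∫ ω in t, X ω ∂μ := by
    intro t ht
    refine @MeasurableSpace.induction_on_inter Ω (mA ⊔ mB)
      (fun t _ => ∫ ω in t, (μ[X|mA]) ω ∂μ = ∫ ω in t, X ω ∂μ) _
      hCgen hpi (by simp) ?_ ?_ ?_ t ht
    · rintro s ⟨A, B, hA, hB, rfl⟩
      exact hrect A B hA hB
    · intro u hu hCu
      have hu0 : MeasurableSet u := hmAB u hu
      have h1 := integral_add_compl hu0 (integrable_condExp (f := X) (m := mA) (μ := μ))
      have h2 := integral_add_compl hu0 hX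
      have huniv : ∫ ω, (μ[X|mA]) ω ∂μ = ∫ ω, X ω ∂μ := integral_condExp hmA
      linarith
    · intro g hdisj hgm hCg
      rw [integral_iUnion (fun i => hmAB _ (hgm i)) hdisj integrable_condExp.integrableOn,
        integral_iUnion (fun i => hmAB _ (hgm i)) hdisj hX.integrableOn]
      exact tsum_congr hCg
  exact (ae_eq_condExp_of_forall_setIntegral_eq hmAB hX
    (fun s _ _ => integrable_condExp.integrableOn)
    (fun s hs _ => hC s hs)
    ((stronglyMeasurable_condExp.mono (le_sup_left : mA ≤ mA ⊔ mB)).aestronglyMeasurable)).symm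


lemma sum_sm {Ω S : Type*} [MeasurableSpace S] (ξ : ℤ → Ω → S) (f : S → ℝ) (hf : Measurable f)
    (I : Set ℤ) (s : Finset ℕ) (h : ∀ i ∈ s, (i : ℤ) ∈ I) :
    StronglyMeasurable[sigmaOf ξ I] (fun ω => ∑ i ∈ s, f (ξ (i : ℤ) ω)) := by
  letI m : MeasurableSpace Ω := sigmaOf ξ I
  have hmeas : ∀ i ∈ s, Measurable fun ω => f (ξ (i : ℤ) ω) := by
    intro i hi
    have h1 : @Measurable Ω S (MeasurableSpace.comap (ξ (i : ℤ)) inferInstance) _ (ξ (i : ℤ)) :=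
      fun t ht => ⟨t, ht, rfl⟩
    have h2 : MeasurableSpace.comap (ξ (i : ℤ)) inferInstance ≤ sigmaOf ξ I :=
      le_iSup₂ (f := fun (k : ℤ) (_ : k ∈ I) => MeasurableSpace.comap (ξ k) inferInstance)
        (i : ℤ) (h i hi)
    exact (hf.comp h1).mono h2 le_rfl
  exact (Finset.measurable_sum s hmeas).stronglyMeasurable

lemma map_eval_eq {Ω S : Type*} [MeasurableSpace Ω] [MeasurableSpace S]
    (μ : Measure Ω) (ξ : ℤ → Ω → S) (hmeas : ∀ n, Measurable (ξ n))
    (hstat : IsStationaryZ μ ξ) : ∀ k : ℤ, Measure.map (ξ k) μ = Measure.map (ξ 0) μ := by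
  have hY : Measurable fun ω (k : ℤ) => ξ k ω := measurable_pi_lambda _ hmeas
  have hY' : Measurable fun ω (k : ℤ) => ξ (k + 1) ω :=
    measurable_pi_lambda _ (fun k => hmeas (k + 1))
  have hstep : ∀ k : ℤ, Measure.map (ξ (k + 1)) μ = Measure.map (ξ k) μ := by
    intro k
    have h1 : ξ (k + 1) = (fun x : ℤ → S => x k) ∘ (fun ω (j : ℤ) => ξ (j + 1) ω) := rfl
    have h2 : ξ k = (fun x : ℤ → S => x k) ∘ (fun ω (j : ℤ) => ξ j ω) := rfl
    rw [h1, h2, ← Measure.map_map (measurable_pi_apply k) hY',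
      ← Measure.map_map (measurable_pi_apply k) hY, hstat]
  intro k
  induction k using Int.induction_on with
  | zero => rfl
  | succ i ih => rw [hstep i, ih]
  | pred i ih =>
    have h := hstep (-(i : ℤ) - 1)
    rw [show (-(i : ℤ) - 1 + 1) = -(i : ℤ) by ring] at h
    rw [← h]; exact ih

end Helpers


theorem stmt11 {Ω S : Type*} [MeasurableSpace Ω] [MeasurableSpace S]
    (μ : Measure Ω) [IsProbabilityMeasure μ] (ξ : ℤ → Ω → S)
    (hmeas : ∀ n, Measurable (ξ n))
    (hstat : IsStationaryZ μ ξ) (hmarkov : IsMarkovChain μ ξ)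
    (f : S → ℝ) (hf : Measurable f)
    (hmean : ∫ ω, f (ξ 0 ω) ∂μ = 0)
    (hL2 : MemLp (fun ω => f (ξ 0 ω)) 2 μ) :
    ∀ m n : ℕ, 1 ≤ m → 1 ≤ n →
      eLpNorm (μ[pS ξ f (n + m) | pairSigma ξ 0 (n + m)]) 2 μ ≤
        eLpNorm (μ[pS ξ f n | pairSigma ξ 0 n]) 2 μ +
          eLpNorm (μ[pS ξ f m | pairSigma ξ 0 m]) 2 μ := by
  intro m n hm1 hn1
  classical
  set N := n + m with hN
  set ev : ℤ → (ℤ → S) → S := fun k x => x k with hev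
  have hY : Measurable fun ω (k : ℤ) => ξ k ω := measurable_pi_lambda _ hmeas
  set Y : Ω → (ℤ → S) := fun ω k => ξ k ω with hYdef
  set ν : Measure (ℤ → S) := Measure.map Y μ with hν
  haveI hνprob : IsProbabilityMeasure ν := Measure.isProbabilityMeasure_map hY.aemeasurable
  have hσ : Measurable (shiftZ (S := S)) :=
    measurable_pi_lambda _ (fun k => measurable_pi_apply (k + 1))
  have hσn : ∀ j : ℕ, Measurable ((shiftZ (S := S))^[j]) := fun j => hσ.iterate j
  have hshift : Measure.map shiftZ ν = ν := by
    rw [hν, hYdef, Measure.map_map hσ hY]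
    have hcomp : (shiftZ ∘ fun ω (k : ℤ) => ξ k ω) = fun ω (k : ℤ) => ξ (k + 1) ω := rfl
    rw [hcomp, hstat]
  have hshiftn : ∀ j : ℕ, Measure.map (shiftZ^[j]) ν = ν := by
    intro j
    induction j with
    | zero => simp
    | succ j ih =>
      rw [Function.iterate_succ', ← Measure.map_map hσ (hσn j), ih, hshift]
  have hiter : ∀ (j : ℕ) (x : ℤ → S) (k : ℤ), (shiftZ (S := S))^[j] x k = x (k + j) := by
    intro j
    induction j with
    | zero => intro x k; simp
    | succ j ih =>
      intro x k
      rw [Function.iterate_succ, Function.comp_apply, ih (shiftZ x) k]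
      show x (k + (j : ℤ) + 1) = x (k + ((j : ℕ) + 1 : ℕ))
      congr 1; push_cast; ring
  -- one-dimensional marginals and moments
  have hmap1 := map_eval_eq μ ξ hmeas hstat
  have hmem : ∀ k : ℤ, MemLp (fun ω => f (ξ k ω)) 2 μ := by
    intro k
    have h0 : MemLp f 2 (Measure.map (ξ 0) μ) :=
      (memLp_map_measure_iff hf.aestronglyMeasurable (hmeas 0).aemeasurable).mpr hL2
    have hk : MemLp f 2 (Measure.map (ξ k) μ) := by rw [hmap1 k]; exact h0
    exact (memLp_map_measure_iff hf.aestronglyMeasurable (hmeas k).aemeasurable).mp hk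
  have hSmem : ∀ s : Finset ℕ, MemLp (fun ω => ∑ i ∈ s, f (ξ (i : ℤ) ω)) 2 μ := by
    intro s
    exact memLp_finsetSum s (fun i _ => hmem (i : ℤ))
  have hpSmem : ∀ k : ℕ, MemLp (pS ξ f k) 2 μ := fun k => hSmem _
  have hpSint : ∀ k : ℕ, Integrable (pS ξ f k) μ := fun k => (hpSmem k).integrable one_le_two
  -- σ-algebra inequalities
  have hle_sigmaOf : ∀ (I : Set ℤ) (k : ℤ), k ∈ I →
      MeasurableSpace.comap (ξ k) inferInstance ≤ sigmaOf ξ I := fun I k hk =>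
    le_iSup₂ (f := fun (k : ℤ) (_ : k ∈ I) => MeasurableSpace.comap (ξ k) inferInstance) k hk
  have hsig_le : ∀ I : Set ℤ, sigmaOf ξ I ≤ ‹MeasurableSpace Ω› := fun I =>
    iSup₂_le fun k _ => (hmeas k).comap_le
  have hpair_le : ∀ i j : ℤ, pairSigma ξ i j ≤ ‹MeasurableSpace Ω› := fun i j =>
    sup_le (hmeas i).comap_le (hmeas j).comap_le
  -- the tail sum
  set T : Ω → ℝ := fun ω => ∑ i ∈ Finset.Ioc n N, f (ξ (i : ℤ) ω) with hTdef
  have hT_mem : MemLp T 2 μ := hSmem _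
  have hT_int : Integrable T μ := hT_mem.integrable one_le_two
  have hsplit : pS ξ f N = pS ξ f n + T := by
    funext ω
    show ∑ i ∈ Finset.Icc 1 N, f (ξ (i : ℤ) ω)
      = (∑ i ∈ Finset.Icc 1 n, f (ξ (i : ℤ) ω)) + ∑ i ∈ Finset.Ioc n N, f (ξ (i : ℤ) ω)
    rw [show Finset.Icc 1 N = Finset.Ioc 0 N from Finset.Icc_add_one_left_eq_Ioc 0 N,
      show Finset.Icc 1 n = Finset.Ioc 0 n from Finset.Icc_add_one_left_eq_Ioc 0 n]
    exact (Finset.sum_Ioc_consecutive _ (Nat.zero_le n) (hN ▸ Nat.le_add_right n m)).symm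
  -- Step 1: triangle inequality
  have haesm : ∀ g : Ω → ℝ, AEStronglyMeasurable (μ[g|pairSigma ξ 0 N]) μ := fun g =>
    (stronglyMeasurable_condExp.mono (hpair_le 0 N)).aestronglyMeasurable
  have htri : eLpNorm (μ[pS ξ f N | pairSigma ξ 0 N]) 2 μ
      ≤ eLpNorm (μ[pS ξ f n | pairSigma ξ 0 N]) 2 μ
        + eLpNorm (μ[T | pairSigma ξ 0 N]) 2 μ := by
    have hadd : μ[pS ξ f N | pairSigma ξ 0 N]
        =ᵐ[μ] μ[pS ξ f n | pairSigma ξ 0 N] + μ[T | pairSigma ξ 0 N] := by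
      rw [hsplit]; exact condExp_add (hpSint n) hT_int _
    rw [eLpNorm_congr_ae hadd]
    exact eLpNorm_add_le (haesm _) (haesm _) one_le_two
  -- Step 2: Markov bound for the head
  have hnN : (n : ℤ) ≤ (N : ℤ) := by exact_mod_cast hN ▸ Nat.le_add_right n m
  have h0n : (0 : ℤ) ≤ (n : ℤ) := by exact_mod_cast Nat.zero_le n
  have hkeyA : μ[pS ξ f n | pairSigma ξ 0 n ⊔ MeasurableSpace.comap (ξ (N : ℤ)) inferInstance]
      =ᵐ[μ] μ[pS ξ f n | pairSigma ξ 0 n] := by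
    refine condexp_sup_of_condIndep μ (hsig_le _) (hsig_le _) (hmarkov (n : ℤ))
      le_sup_right ?_ ?_ (hpSint n) ?_
    · exact sup_le (hle_sigmaOf _ 0 h0n) (hle_sigmaOf _ (n : ℤ) (le_refl (n : ℤ)))
    · exact hle_sigmaOf _ (N : ℤ) hnN
    · refine sum_sm ξ f hf _ _ (fun i hi => ?_)
      rw [Finset.mem_Icc] at hi
      show (i : ℤ) ≤ (n : ℤ)
      exact_mod_cast hi.2
  have hsupA_le : pairSigma ξ 0 n ⊔ MeasurableSpace.comap (ξ (N : ℤ)) inferInstance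
      ≤ ‹MeasurableSpace Ω› := sup_le (hpair_le 0 n) (hmeas _).comap_le
  have hfull_le_A : pairSigma ξ 0 N ≤
      pairSigma ξ 0 n ⊔ MeasurableSpace.comap (ξ (N : ℤ)) inferInstance :=
    sup_le (le_trans le_sup_left le_sup_left) le_sup_right
  have hstepA : μ[pS ξ f n | pairSigma ξ 0 N]
      =ᵐ[μ] μ[μ[pS ξ f n | pairSigma ξ 0 n] | pairSigma ξ 0 N] :=
    (condExp_condExp_of_le hfull_le_A hsupA_le).symm.trans (condExp_congr_ae hkeyA)
  have hboundA : eLpNorm (μ[pS ξ f n | pairSigma ξ 0 N]) 2 μ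
      ≤ eLpNorm (μ[pS ξ f n | pairSigma ξ 0 n]) 2 μ := by
    rw [eLpNorm_congr_ae hstepA]
    exact eLpNorm_two_condexp_le (hpair_le 0 N) μ
      (memℒp_two_condexp (hpair_le 0 n) μ (hpSmem n))
  -- Step 3: Markov bound for the tail
  have hCIswap : CondIndepGiven μ (MeasurableSpace.comap (ξ (n : ℤ)) inferInstance)
      (sigmaOf ξ {k | (n : ℤ) ≤ k}) (sigmaOf ξ {k | k ≤ (n : ℤ)}) := by
    intro A B hA hB
    have h := hmarkov (n : ℤ) B A hB hA
    rw [Set.inter_comm] at h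
    exact h.trans (Eventually.of_forall fun ω => mul_comm _ _)
  have hkeyB : μ[T | pairSigma ξ n N ⊔ MeasurableSpace.comap (ξ (0 : ℤ)) inferInstance]
      =ᵐ[μ] μ[T | pairSigma ξ n N] := by
    refine condexp_sup_of_condIndep μ (hsig_le _) (hsig_le _) hCIswap
      le_sup_left ?_ ?_ hT_int ?_
    · exact sup_le (hle_sigmaOf _ (n : ℤ) (le_refl (n : ℤ))) (hle_sigmaOf _ (N : ℤ) hnN)
    · exact hle_sigmaOf _ 0 h0n
    · refine sum_sm ξ f hf _ _ (fun i hi => ?_)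
      rw [Finset.mem_Ioc] at hi
      have : n < i := hi.1
      show (n : ℤ) ≤ (i : ℤ)
      exact_mod_cast this.le
  have hsupB_le : pairSigma ξ n N ⊔ MeasurableSpace.comap (ξ (0 : ℤ)) inferInstance
      ≤ ‹MeasurableSpace Ω› := sup_le (hpair_le n N) (hmeas _).comap_le
  have hfull_le_B : pairSigma ξ 0 N ≤
      pairSigma ξ n N ⊔ MeasurableSpace.comap (ξ (0 : ℤ)) inferInstance :=
    sup_le le_sup_right (le_trans le_sup_right le_sup_left)
  have hstepB : μ[T | pairSigma ξ 0 N]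
      =ᵐ[μ] μ[μ[T | pairSigma ξ n N] | pairSigma ξ 0 N] :=
    (condExp_condExp_of_le hfull_le_B hsupB_le).symm.trans (condExp_congr_ae hkeyB)
  have hboundB : eLpNorm (μ[T | pairSigma ξ 0 N]) 2 μ
      ≤ eLpNorm (μ[T | pairSigma ξ n N]) 2 μ := by
    rw [eLpNorm_congr_ae hstepB]
    exact eLpNorm_two_condexp_le (hpair_le 0 N) μ
      (memℒp_two_condexp (hpair_le n N) μ hT_mem)
  -- Step 4: stationarity
  set G : (ℤ → S) → ℝ := fun x => ∑ i ∈ Finset.Ioc n N, f (x (i : ℤ)) with hG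
  set Hm : (ℤ → S) → ℝ := fun x => ∑ i ∈ Finset.Icc 1 m, f (x (i : ℤ)) with hHm
  have hG_meas : Measurable G :=
    Finset.measurable_sum _ (fun i _ => hf.comp (measurable_pi_apply _))
  have hHm_meas : Measurable Hm :=
    Finset.measurable_sum _ (fun i _ => hf.comp (measurable_pi_apply _))
  have hG_int : Integrable G ν :=
    (integrable_map_measure hG_meas.aestronglyMeasurable hY.aemeasurable).mpr hT_int
  have hHm_int : Integrable Hm ν :=
    (integrable_map_measure hHm_meas.aestronglyMeasurable hY.aemeasurable).mpr (hpSint m)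
  have hpairpath_le : ∀ i j : ℤ, pairSigma ev i j ≤ (inferInstance : MeasurableSpace (ℤ → S)) :=
    fun i j => sup_le (measurable_pi_apply i).comap_le (measurable_pi_apply j).comap_le
  have hcomap_pair : ∀ i j : ℤ, pairSigma ξ i j = (pairSigma ev i j).comap Y := by
    intro i j
    rw [pairSigma, pairSigma, MeasurableSpace.comap_sup, MeasurableSpace.comap_comp,
      MeasurableSpace.comap_comp]
    rfl
  have he0 : ev 0 ∘ (shiftZ (S := S))^[n] = ev (n : ℤ) := by
    funext x
    show (shiftZ^[n] x) 0 = x (n : ℤ)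
    rw [hiter]; norm_num
  have hem : ev (m : ℤ) ∘ (shiftZ (S := S))^[n] = ev (N : ℤ) := by
    funext x
    show (shiftZ^[n] x) (m : ℤ) = x (N : ℤ)
    rw [hiter]
    congr 1
    rw [hN]; push_cast; ring
  have hpairshift : pairSigma ev (n : ℤ) (N : ℤ)
      = (pairSigma ev 0 (m : ℤ)).comap ((shiftZ (S := S))^[n]) := by
    rw [pairSigma, pairSigma, MeasurableSpace.comap_sup, MeasurableSpace.comap_comp,
      MeasurableSpace.comap_comp, he0, hem]
  have hGHm : G = Hm ∘ (shiftZ (S := S))^[n] := by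
    funext x
    show (∑ i ∈ Finset.Ioc n N, f (x (i : ℤ))) = ∑ i ∈ Finset.Icc 1 m, f ((shiftZ^[n] x) (i : ℤ))
    have e : Finset.Ioc n N = Finset.map (addLeftEmbedding n) (Finset.Icc 1 m) := by
      rw [Finset.map_add_left_Icc, hN]
      exact (Finset.Icc_add_one_left_eq_Ioc n (n + m)).symm
    rw [e, Finset.sum_map]
    refine Finset.sum_congr rfl fun i hi => ?_
    rw [hiter n x (i : ℤ)]
    congr 1
    rw [addLeftEmbedding_apply]
    push_cast; ring
  -- transports
  have htrans1 : μ[T | pairSigma ξ (n : ℤ) (N : ℤ)]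
      =ᵐ[μ] (ν[G | pairSigma ev (n : ℤ) (N : ℤ)]) ∘ Y := by
    rw [hcomap_pair n N]
    exact (condexp_comp_ae_eq μ hY (hpairpath_le n N) hG_int).symm
  have he1 : eLpNorm (μ[T | pairSigma ξ (n : ℤ) (N : ℤ)]) 2 μ
      = eLpNorm (ν[G | pairSigma ev (n : ℤ) (N : ℤ)]) 2 ν := by
    rw [eLpNorm_congr_ae htrans1]
    exact (eLpNorm_map_measure
      (stronglyMeasurable_condExp.mono (hpairpath_le n N)).aestronglyMeasurable
      hY.aemeasurable).symm
  have htrans2 : ν[G | pairSigma ev (n : ℤ) (N : ℤ)]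
      =ᵐ[ν] (ν[Hm | pairSigma ev 0 (m : ℤ)]) ∘ (shiftZ (S := S))^[n] := by
    have h := condexp_comp_ae_eq (μ := ν) (hσn n) (hpairpath_le 0 (m : ℤ)) (H := Hm)
      (by rw [hshiftn n]; exact hHm_int)
    rw [hshiftn n, ← hGHm] at h
    rw [hpairshift]
    exact h.symm
  have he2 : eLpNorm (ν[G | pairSigma ev (n : ℤ) (N : ℤ)]) 2 ν
      = eLpNorm (ν[Hm | pairSigma ev 0 (m : ℤ)]) 2 ν := by
    rw [eLpNorm_congr_ae htrans2]
    have hsm2 : AEStronglyMeasurable (ν[Hm | pairSigma ev 0 (m : ℤ)])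
        (Measure.map ((shiftZ (S := S))^[n]) ν) := by
      rw [hshiftn n]
      exact (stronglyMeasurable_condExp.mono (hpairpath_le 0 (m : ℤ))).aestronglyMeasurable
    have := eLpNorm_map_measure (p := 2) hsm2 (hσn n).aemeasurable
    rw [hshiftn n] at this
    exact this.symm
  have htrans3 : μ[pS ξ f m | pairSigma ξ 0 (m : ℤ)]
      =ᵐ[μ] (ν[Hm | pairSigma ev 0 (m : ℤ)]) ∘ Y := by
    rw [hcomap_pair 0 m]
    exact (condexp_comp_ae_eq μ hY (hpairpath_le 0 (m : ℤ)) hHm_int).symm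
  have he3 : eLpNorm (ν[Hm | pairSigma ev 0 (m : ℤ)]) 2 ν
      = eLpNorm (μ[pS ξ f m | pairSigma ξ 0 (m : ℤ)]) 2 μ := by
    rw [eLpNorm_congr_ae htrans3]
    exact eLpNorm_map_measure
      (stronglyMeasurable_condExp.mono (hpairpath_le 0 (m : ℤ))).aestronglyMeasurable
      hY.aemeasurable
  -- conclusion
  calc eLpNorm (μ[pS ξ f N | pairSigma ξ 0 N]) 2 μ
      ≤ eLpNorm (μ[pS ξ f n | pairSigma ξ 0 N]) 2 μ
        + eLpNorm (μ[T | pairSigma ξ 0 N]) 2 μ := htri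
    _ ≤ eLpNorm (μ[pS ξ f n | pairSigma ξ 0 n]) 2 μ
        + eLpNorm (μ[pS ξ f m | pairSigma ξ 0 m]) 2 μ := by
        refine add_le_add hboundA (hboundB.trans ?_)
        rw [he1, he2, he3]


end
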